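/- Let n ≥ 2 and let σ be a set partition of {2,...,n} with k blocks. Then Σ over set partitions π of {2,...,n} coarsening σ of (n-1)!/(n-|π|)! equals n^{k-1}, where |π| denotes the number of blocks of π. -/

import Mathlib

open Finset

namespace SumCoarsenAux

variable {α β : Type*} [DecidableEq α] [DecidableEq β] {s : Finset α} (σ π : Finpartition s)

/-- The union of all parts of `σ` on which `g` takes the same value as on `b`. -/
def merged (g : ↥σ.parts → β) (b : ↥σ.parts) : Finset α :=
  (σ.parts.attach.filter fun c => g c = g b).sup fun c => (c : Finset α)

variable {σ}

lemma mem_merged {g : ↥σ.parts → β} {b : ↥σ.parts} {x : α} :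
    x ∈ merged σ g b ↔ ∃ c : ↥σ.parts, g c = g b ∧ x ∈ (c : Finset α) := by
  simp [merged, Finset.mem_sup]

lemma subset_merged (g : ↥σ.parts → β) (b : ↥σ.parts) : (b : Finset α) ⊆ merged σ g b :=
  fun _ hx => mem_merged.2 ⟨b, rfl, hx⟩

lemma merged_subset (g : ↥σ.parts → β) (b : ↥σ.parts) : merged σ g b ⊆ s := by
  intro x hx
  obtain ⟨c, -, hxc⟩ := mem_merged.1 hx
  exact σ.le c.2 hxc

lemma merged_congr {g : ↥σ.parts → β} {b b' : ↥σ.parts} (h : g b = g b') :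
    merged σ g b = merged σ g b' := by
  unfold merged
  congr 1
  apply Finset.filter_congr
  intro c _
  simp [h]

lemma g_eq_of_mem_merged {g : ↥σ.parts → β} {b b' : ↥σ.parts} {x : α}
    (h : x ∈ merged σ g b) (h' : x ∈ merged σ g b') : g b = g b' := by
  obtain ⟨c, hc, hxc⟩ := mem_merged.1 h
  obtain ⟨c', hc', hxc'⟩ := mem_merged.1 h'
  have : c = c' := Subtype.ext (σ.eq_of_mem_parts c.2 c'.2 hxc hxc')
  rw [← hc, ← hc', this]

variable (σ)

/-- The kernel partition of `g`: merge parts of `σ` with equal `g`-values. -/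
def kernel (g : ↥σ.parts → β) : Finpartition s where
  parts := σ.parts.attach.image fun b => merged σ g b
  supIndep := by
    rw [Finset.supIndep_iff_pairwiseDisjoint]
    intro t ht u hu htu
    simp only [coe_image, Set.mem_image, mem_coe, mem_attach, true_and] at ht hu
    obtain ⟨b, rfl⟩ := ht
    obtain ⟨b', rfl⟩ := hu
    refine Finset.disjoint_left.2 ?_
    intro x hx hx'
    exact htu (merged_congr (g_eq_of_mem_merged hx hx'))
  sup_parts := by
    apply le_antisymm
    · exact Finset.sup_le fun t ht => by
        obtain ⟨b, -, rfl⟩ := Finset.mem_image.1 ht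
        exact merged_subset g b
    · intro x hx
      exact Finset.mem_sup.2 ⟨merged σ g ⟨σ.part x, σ.part_mem.2 hx⟩,
        Finset.mem_image_of_mem _ (mem_attach _ _),
        subset_merged g _ (σ.mem_part hx)⟩
  bot_notMem := by
    intro h
    obtain ⟨b, -, hb⟩ := Finset.mem_image.1 h
    obtain ⟨x, hx⟩ := σ.nonempty_of_mem_parts b.2
    have : x ∈ merged σ g b := subset_merged g b hx
    rw [hb] at this
    exact absurd this (Finset.notMem_empty x)

lemma le_kernel (g : ↥σ.parts → β) : σ ≤ kernel σ g := fun b hb =>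
  ⟨merged σ g ⟨b, hb⟩, Finset.mem_image_of_mem _ (mem_attach _ _), subset_merged g ⟨b, hb⟩⟩

lemma mem_kernel_parts {g : ↥σ.parts → β} {t : Finset α} :
    t ∈ (kernel σ g).parts ↔ ∃ b : ↥σ.parts, merged σ g b = t := by
  simp [kernel]

variable {σ}

/-- A chosen point of a part. -/
noncomputable def pt (b : ↥σ.parts) : α := (σ.nonempty_of_mem_parts b.2).choose

lemma pt_mem (b : ↥σ.parts) : pt b ∈ (b : Finset α) := (σ.nonempty_of_mem_parts b.2).choose_spec

lemma pt_mem_s (b : ↥σ.parts) : pt b ∈ s := σ.le b.2 (pt_mem b)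

/-- The part of `π` containing the chosen point of `b`. -/
noncomputable def up (π : Finpartition s) (b : ↥σ.parts) : ↥π.parts :=
  ⟨π.part (pt b), π.part_mem.2 (pt_mem_s b)⟩

lemma pt_mem_up (π : Finpartition s) (b : ↥σ.parts) : pt b ∈ (up π b : Finset α) :=
  π.mem_part (pt_mem_s b)

lemma subset_up (hσπ : σ ≤ π) (b : ↥σ.parts) : (b : Finset α) ⊆ (up π b : Finset α) := by
  obtain ⟨c, hc, hbc⟩ := hσπ b.2
  have : π.part (pt b) = c := π.part_eq_of_mem hc (hbc (pt_mem b))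
  show (b : Finset α) ⊆ π.part (pt b)
  rw [this]; exact hbc

lemma up_eq_of_subset (hσπ : σ ≤ π) {b : ↥σ.parts} {d : ↥π.parts}
    (h : (b : Finset α) ⊆ (d : Finset α)) : up π b = d :=
  Subtype.ext (π.eq_of_mem_parts (up π b).2 d.2 (subset_up π hσπ b (pt_mem b)) (h (pt_mem b)))

/-- A chosen `σ`-part inside a `π`-part. -/
noncomputable def rep (d : ↥π.parts) : ↥σ.parts :=
  ⟨σ.part (pt d), σ.part_mem.2 (π.le d.2 (pt_mem d))⟩

lemma pt_mem_rep (d : ↥π.parts) : pt d ∈ ((rep (σ := σ) π d) : Finset α) :=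
  σ.mem_part (π.le d.2 (pt_mem d))

lemma rep_subset (hσπ : σ ≤ π) (d : ↥π.parts) :
    ((rep (σ := σ) π d) : Finset α) ⊆ (d : Finset α) := by
  obtain ⟨c, hc, hrc⟩ := hσπ (rep (σ := σ) π d).2
  have : c = (d : Finset α) := π.eq_of_mem_parts hc d.2 (hrc (pt_mem_rep π d)) (pt_mem d)
  exact this ▸ hrc

lemma up_rep (hσπ : σ ≤ π) (d : ↥π.parts) : up π (rep (σ := σ) π d) = d :=
  up_eq_of_subset π hσπ (rep_subset π hσπ d)

section Fiber

variable {π}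

/-- Lemma A: if `kernel g = π` then the merged class of `rep d` is `d`. -/
lemma merged_rep {g : ↥σ.parts → β} (hσπ : σ ≤ π) (hg : kernel σ g = π) (d : ↥π.parts) :
    merged σ g (rep (σ := σ) π d) = (d : Finset α) := by
  have hmem : merged σ g (rep (σ := σ) π d) ∈ (kernel σ g).parts :=
    (mem_kernel_parts σ).2 ⟨_, rfl⟩
  rw [hg] at hmem
  exact π.eq_of_mem_parts hmem d.2
    (subset_merged g _ (pt_mem_rep π d)) (rep_subset π hσπ d (pt_mem_rep π d))

/-- Lemma D: if `b ⊆ merged g c` then `g b = g c`. -/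
lemma g_eq_of_subset_merged {g : ↥σ.parts → β} {b c : ↥σ.parts}
    (h : (b : Finset α) ⊆ merged σ g c) : g b = g c := by
  obtain ⟨c', hc', hxc'⟩ := mem_merged.1 (h (pt_mem b))
  have : c' = b := Subtype.ext (σ.eq_of_mem_parts c'.2 b.2 hxc' (pt_mem b))
  rwa [this] at hc'

/-- Lemma E: if `kernel g = π` then `g` is determined by `rep ∘ up`. -/
lemma g_eq_rep_up {g : ↥σ.parts → β} (hσπ : σ ≤ π) (hg : kernel σ g = π) (b : ↥σ.parts) :
    g b = g (rep (σ := σ) π (up π b)) := by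
  have hmem : ((up π b : Finset α)) ∈ (kernel σ g).parts := by rw [hg]; exact (up π b).2
  obtain ⟨c, hc⟩ := (mem_kernel_parts σ).1 hmem
  have h1 : g b = g c := g_eq_of_subset_merged (by rw [hc]; exact subset_up π hσπ b)
  have h2 : g (rep (σ := σ) π (up π b)) = g c :=
    g_eq_of_subset_merged (by rw [hc]; exact rep_subset π hσπ (up π b))
  rw [h1, h2]

variable {n : ℕ}

/-- The function induced by an embedding of the parts of `π`. -/
noncomputable def ofEmb (ι : ↥π.parts ↪ Fin n) : ↥σ.parts → Fin n := fun b => ι (up π b)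

lemma merged_ofEmb (hσπ : σ ≤ π) (ι : ↥π.parts ↪ Fin n) (b : ↥σ.parts) :
    merged σ (ofEmb (σ := σ) ι) b = (up π b : Finset α) := by
  apply Finset.Subset.antisymm
  · intro x hx
    obtain ⟨c, hc, hxc⟩ := mem_merged.1 hx
    have : up π c = up π b := ι.injective hc
    exact this ▸ subset_up π hσπ c hxc
  · intro x hx
    have hxs : x ∈ s := π.le (up π b).2 hx
    set c : ↥σ.parts := ⟨σ.part x, σ.part_mem.2 hxs⟩ with hc
    have hcup : up π c = up π b := by
      refine Subtype.ext (π.eq_of_mem_parts (up π c).2 (up π b).2 ?_ hx)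
      exact subset_up π hσπ c (σ.mem_part hxs)
    exact mem_merged.2 ⟨c, congrArg ι hcup, σ.mem_part hxs⟩

lemma kernel_ofEmb (hσπ : σ ≤ π) (ι : ↥π.parts ↪ Fin n) : kernel σ (ofEmb (σ := σ) ι) = π := by
  ext t
  constructor
  · intro ht
    obtain ⟨b, rfl⟩ := (mem_kernel_parts σ).1 ht
    rw [merged_ofEmb hσπ]
    exact (up π b).2
  · intro ht
    have : t = (up π (rep (σ := σ) π ⟨t, ht⟩) : Finset α) := by
      rw [up_rep π hσπ]
    rw [this, ← merged_ofEmb hσπ]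
    exact (mem_kernel_parts σ).2 ⟨_, rfl⟩

lemma ofEmb_rep (hσπ : σ ≤ π) (ι : ↥π.parts ↪ Fin n) (d : ↥π.parts) :
    ofEmb (σ := σ) ι (rep (σ := σ) π d) = ι d := congrArg ι (up_rep π hσπ d)

/-- The fiber of the kernel map over `π` is in bijection with embeddings of parts. -/
noncomputable def fiberEquivAux (hσπ : σ ≤ π) : {g : ↥σ.parts → Fin n // kernel σ g = π} → (↥π.parts ↪ Fin n) :=
  fun gh => ⟨fun d => gh.1 (rep (σ := σ) π d), by
    intro d d' h
    have := merged_congr (σ := σ) (g := gh.1) h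
    rw [merged_rep hσπ gh.2, merged_rep hσπ gh.2] at this
    exact Subtype.ext this⟩

lemma fiberEquivAux_bij (hσπ : σ ≤ π) : Function.Bijective (fiberEquivAux (σ := σ) (n := n) hσπ) := by
  constructor
  · rintro ⟨g, hg⟩ ⟨g', hg'⟩ h
    have h' : ∀ d, g (rep (σ := σ) π d) = g' (rep (σ := σ) π d) := fun d =>
      congrFun (congrArg (fun (e : ↥π.parts ↪ Fin n) => (e : ↥π.parts → Fin n)) h) d
    refine Subtype.ext (funext fun b => ?_)
    show g b = g' b
    rw [g_eq_rep_up hσπ hg b, g_eq_rep_up hσπ hg' b, h']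
  · intro ι
    exact ⟨⟨ofEmb (σ := σ) ι, kernel_ofEmb hσπ ι⟩,
      DFunLike.ext _ _ fun d => ofEmb_rep hσπ ι d⟩

lemma fiber_card (hσπ : σ ≤ π) (n : ℕ) :
    Fintype.card {g : ↥σ.parts → Fin n // kernel σ g = π} = n.descFactorial π.parts.card := by
  rw [Fintype.card_congr (Equiv.ofBijective _ (fiberEquivAux_bij (σ := σ) (n := n) hσπ)),
    Fintype.card_embedding_eq, Fintype.card_coe, Fintype.card_fin]

end Fiber

open scoped Classical in
lemma count (σ : Finpartition s) (n : ℕ) :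
    ∑ π : Finpartition s, (if σ ≤ π then n.descFactorial π.parts.card else 0)
      = n ^ σ.parts.card := by
  have h1 : (Finset.univ : Finset (↥σ.parts → Fin n)).card
      = ∑ π : Finpartition s, ((Finset.univ : Finset (↥σ.parts → Fin n)).filter
          fun g => kernel σ g = π).card :=
    Finset.card_eq_sum_card_fiberwise fun g _ => Finset.mem_univ _
  have h2 : (Finset.univ : Finset (↥σ.parts → Fin n)).card = n ^ σ.parts.card := by
    rw [← Fintype.card, Fintype.card_fun, Fintype.card_coe, Fintype.card_fin]
  rw [← h2, h1]
  apply Finset.sum_congr rfl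
  intro π _
  by_cases hσπ : σ ≤ π
  · rw [if_pos hσπ, ← fiber_card hσπ n, Fintype.card_subtype]
  · rw [if_neg hσπ]
    symm
    rw [Finset.card_eq_zero]
    apply Finset.filter_eq_empty_iff.2
    intro g _
    intro h
    exact hσπ (h ▸ le_kernel σ g)

end SumCoarsenAux

open scoped Classical in
/-- For `n ≥ 2` and a set partition `σ` of `{2,…,n}` with `k` blocks, the sum over set
partitions `π` of `{2,…,n}` coarsening `σ` of `(n-1)!/(n-|π|)!` equals `n^(k-1)`. -/
theorem sum_over_coarsenings (n : ℕ) (hn : 2 ≤ n) (σ : Finpartition (Finset.Icc 2 n)) :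
    ∑ π : Finpartition (Finset.Icc 2 n),
        (if σ ≤ π then (Nat.factorial (n - 1) : ℚ) / (Nat.factorial (n - π.parts.card) : ℚ)
          else 0) =
      (n : ℚ) ^ (σ.parts.card - 1) := by
  have hs : (Finset.Icc 2 n).card = n - 1 := by
    rw [Nat.card_Icc]
    omega
  have hn0 : (n : ℚ) ≠ 0 := by positivity
  have hk : 1 ≤ σ.parts.card := by
    have : σ.parts.Nonempty := σ.parts_nonempty (by
      simp only [Finset.bot_eq_empty, ← Finset.nonempty_iff_ne_empty, Finset.nonempty_Icc]
      omega)
    exact Finset.card_pos.2 this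
  have key := SumCoarsenAux.count σ n
  have hterm : ∀ π : Finpartition (Finset.Icc 2 n), σ ≤ π →
      (Nat.factorial (n - 1) : ℚ) / (Nat.factorial (n - π.parts.card) : ℚ)
        = (n.descFactorial π.parts.card : ℚ) / n := by
    intro π _
    have hj : π.parts.card ≤ n - 1 := hs ▸ π.card_parts_le_card
    have hjn : π.parts.card ≤ n := le_trans hj (Nat.sub_le n 1)
    have hfact : ((n - π.parts.card).factorial * n.descFactorial π.parts.card : ℚ)
        = (n.factorial : ℚ) := by
      exact_mod_cast congrArg (Nat.cast (R := ℚ)) (Nat.factorial_mul_descFactorial hjn)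
    have hnn : (n.factorial : ℚ) = n * (n - 1).factorial := by
      have h' : n - 1 + 1 = n := by omega
      have : (n.factorial : ℚ) = ((n - 1 + 1) * (n - 1).factorial : ℕ) := by
        rw [← Nat.factorial_succ, h']
      rw [this]
      push_cast [h']
      ring
    have hne : ((n - π.parts.card).factorial : ℚ) ≠ 0 := by
      exact_mod_cast Nat.factorial_ne_zero _
    rw [div_eq_div_iff hne hn0]
    linear_combination -hfact - hnn
  calc ∑ π : Finpartition (Finset.Icc 2 n),
        (if σ ≤ π then (Nat.factorial (n - 1) : ℚ) / (Nat.factorial (n - π.parts.card) : ℚ)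
          else 0)
      = ∑ π : Finpartition (Finset.Icc 2 n),
        (if σ ≤ π then (n.descFactorial π.parts.card : ℚ) / n else 0) := by
        apply Finset.sum_congr rfl
        intro π _
        split_ifs with h
        · exact hterm π h
        · rfl
    _ = (∑ π : Finpartition (Finset.Icc 2 n),
        (if σ ≤ π then (n.descFactorial π.parts.card : ℚ) else 0)) / n := by
        rw [Finset.sum_div]
        apply Finset.sum_congr rfl
        intro π _
        split_ifs with h
        · rfl
        · simp
    _ = ((n : ℚ) ^ σ.parts.card) / n := by
        congr 1
        exact_mod_cast congrArg (Nat.cast (R := ℚ)) key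
    _ = (n : ℚ) ^ (σ.parts.card - 1) := by
        have hkk : σ.parts.card = (σ.parts.card - 1) + 1 := by omega
        rw [hkk, pow_succ, mul_div_cancel_right₀ _ hn0]
        norm_num
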